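/- Let X1, ..., Xn be mutually independent random variables on a finite probability space, and let S1, S2, S3 be subsets of {1,...,n} with S1 ∩ S2 ∩ S3 = ∅. Write 𝒳i for the tuple (Xj : j ∈ Si). Then for any random variable Y, H(Y | 𝒳1) + H(Y | 𝒳2) + H(Y | 𝒳3) ≥ H(Y). -/

import Mathlib

open Finset

/-- Probability mass of the event `X = a` under weights `p`. -/
noncomputable def pmass {Ω α : Type} [Fintype Ω] [DecidableEq α]
    (p : Ω → ℝ) (X : Ω → α) (a : α) : ℝ :=
  ∑ ω, if X ω = a then p ω else 0

/-- Shannon entropy (base 2) of a random variable `X` on a finite space. -/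
noncomputable def ent {Ω α : Type} [Fintype Ω] [Fintype α] [DecidableEq α]
    (p : Ω → ℝ) (X : Ω → α) : ℝ :=
  ∑ a, -(pmass p X a * Real.logb 2 (pmass p X a))

/-- Conditional Shannon entropy `H(X|Y) = H(X,Y) - H(Y)`. -/
noncomputable def condEnt {Ω α β : Type} [Fintype Ω] [Fintype α] [Fintype β]
    [DecidableEq α] [DecidableEq β] (p : Ω → ℝ) (X : Ω → α) (Y : Ω → β) : ℝ :=
  ent p (fun ω => (X ω, Y ω)) - ent p Y

/-- Conditional mutual information `I(X;Y|W) = H(X|W) + H(Y|W) - H(X,Y|W)`. -/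
noncomputable def condMI {Ω α β γ : Type} [Fintype Ω] [Fintype α] [Fintype β] [Fintype γ]
    [DecidableEq α] [DecidableEq β] [DecidableEq γ]
    (p : Ω → ℝ) (X : Ω → α) (Y : Ω → β) (W : Ω → γ) : ℝ :=
  condEnt p X W + condEnt p Y W - condEnt p (fun ω => (X ω, Y ω)) W

/-- Mutual independence of a finite family of random variables:
the joint pmf factorizes as the product of the marginals. -/
def MutIndep {Ω α : Type} {n : ℕ} [Fintype Ω] [DecidableEq α]
    (p : Ω → ℝ) (X : Fin n → Ω → α) : Prop :=
  ∀ a : Fin n → α,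
    pmass p (fun ω => fun i => X i ω) a = ∏ i, pmass p (X i) (a i)

section Auxiliary

variable {Ω α β γ : Type} [Fintype Ω]

lemma pmass_nonneg [DecidableEq α] (p : Ω → ℝ) (hp0 : ∀ ω, 0 ≤ p ω) (X : Ω → α) (a : α) :
    0 ≤ pmass p X a :=
  Finset.sum_nonneg fun ω _ => by split <;> simp [hp0 ω]

lemma sum_pmass [Fintype α] [DecidableEq α] (p : Ω → ℝ) (hp1 : ∑ ω, p ω = 1) (X : Ω → α) :
    ∑ a, pmass p X a = 1 := by
  unfold pmass
  rw [Finset.sum_comm]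
  simpa using hp1

lemma pmass_ne_zero_exists [DecidableEq α] (p : Ω → ℝ) (X : Ω → α) (a : α)
    (h : pmass p X a ≠ 0) : ∃ ω, X ω = a := by
  by_contra hc
  push_neg at hc
  exact h (Finset.sum_eq_zero fun ω _ => by simp [hc ω])

lemma ent_congr [Fintype α] [Fintype γ] [DecidableEq α] [DecidableEq γ]
    (p : Ω → ℝ) (X : Ω → α) (X' : Ω → γ) (f : α → γ) (g : γ → α)
    (hf : ∀ ω, f (X ω) = X' ω) (hg : ∀ ω, g (X' ω) = X ω) :
    ent p X' = ent p X := by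
  classical
  have key : ∀ c : γ, (∃ ω, X' ω = c) → pmass p X' c = pmass p X (g c) := by
    intro c ⟨ω0, h0⟩
    refine Finset.sum_congr rfl fun ω _ => ?_
    congr 1
    rw [eq_iff_iff]
    constructor <;> intro h
    · rw [← h, hg]
    · rw [← hf ω, h, ← h0, hg, hf]
  have key' : ∀ a : α, (∃ ω, X ω = a) → pmass p X a = pmass p X' (f a) := by
    intro a ⟨ω0, h0⟩
    refine Finset.sum_congr rfl fun ω _ => ?_
    congr 1
    rw [eq_iff_iff]
    constructor <;> intro h
    · rw [← h, hf]
    · rw [← hg ω, h, ← h0, hf, hg]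
  unfold ent
  rw [← Finset.sum_filter_of_ne (p := fun c => pmass p X' c ≠ 0)
    (by intro c _ h hc; simp [hc] at h),
    ← Finset.sum_filter_of_ne (p := fun a => pmass p X a ≠ 0)
    (by intro a _ h ha; simp [ha] at h)]
  refine Finset.sum_nbij' (fun c => g c) (fun a => f a) ?_ ?_ ?_ ?_ ?_
  · intro c hc
    simp only [mem_filter, mem_univ, true_and] at hc ⊢
    rwa [← key c (pmass_ne_zero_exists p X' c hc)]
  · intro a ha
    simp only [mem_filter, mem_univ, true_and] at ha ⊢
    rwa [← key' a (pmass_ne_zero_exists p X a ha)]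
  · intro c hc
    simp only [mem_filter, mem_univ, true_and] at hc
    obtain ⟨ω, hω⟩ := pmass_ne_zero_exists p X' c hc
    rw [← hω, hg, hf]
  · intro a ha
    simp only [mem_filter, mem_univ, true_and] at ha
    obtain ⟨ω, hω⟩ := pmass_ne_zero_exists p X a ha
    rw [← hω, hf, hg]
  · intro c hc
    simp only [mem_filter, mem_univ, true_and] at hc
    rw [← key c (pmass_ne_zero_exists p X' c hc)]

lemma pmass_snd' [Fintype α] [Fintype β] [DecidableEq α] [DecidableEq β] (p : Ω → ℝ)
    (X : Ω → α) (Y : Ω → β) (b : β) :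
    pmass p Y b = ∑ a, pmass p (fun ω => (X ω, Y ω)) (a, b) := by
  unfold pmass
  rw [Finset.sum_comm]
  refine Finset.sum_congr rfl fun ω _ => ?_
  rw [Finset.sum_eq_single (X ω)]
  · simp
  · intro a _ ha
    simp only [Prod.mk.injEq, ite_eq_right_iff, and_imp]
    intro h _; exact absurd h.symm ha
  · simp

lemma pmass_tleft [Fintype α] [Fintype β] [Fintype γ] [DecidableEq α] [DecidableEq β]
    [DecidableEq γ] (p : Ω → ℝ) (X : Ω → α) (Y : Ω → β) (W : Ω → γ) (x : α) (w : γ) :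
    pmass p (fun ω => (X ω, W ω)) (x, w)
      = ∑ y, pmass p (fun ω => ((X ω, Y ω), W ω)) ((x, y), w) := by
  unfold pmass
  rw [Finset.sum_comm]
  refine Finset.sum_congr rfl fun ω _ => ?_
  rw [Finset.sum_eq_single (Y ω)]
  · simp [Prod.ext_iff, and_assoc, and_comm]
  · intro y _ hy
    simp only [Prod.mk.injEq, ite_eq_right_iff, and_imp]
    intro _ h _; exact absurd h.symm hy
  · simp

lemma pmass_tright [Fintype α] [Fintype β] [Fintype γ] [DecidableEq α] [DecidableEq β]
    [DecidableEq γ] (p : Ω → ℝ) (X : Ω → α) (Y : Ω → β) (W : Ω → γ) (y : β) (w : γ) :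
    pmass p (fun ω => (Y ω, W ω)) (y, w)
      = ∑ x, pmass p (fun ω => ((X ω, Y ω), W ω)) ((x, y), w) := by
  unfold pmass
  rw [Finset.sum_comm]
  refine Finset.sum_congr rfl fun ω _ => ?_
  rw [Finset.sum_eq_single (X ω)]
  · simp [Prod.ext_iff, and_assoc, and_comm]
  · intro x _ hx
    simp only [Prod.mk.injEq, ite_eq_right_iff, and_imp]
    intro h _ _; exact absurd h.symm hx
  · simp

lemma pmass_tw [Fintype α] [Fintype β] [Fintype γ] [DecidableEq α] [DecidableEq β]
    [DecidableEq γ] (p : Ω → ℝ) (X : Ω → α) (Y : Ω → β) (W : Ω → γ) (w : γ) :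
    pmass p W w = ∑ x, ∑ y, pmass p (fun ω => ((X ω, Y ω), W ω)) ((x, y), w) := by
  rw [pmass_snd' p Y W w, Finset.sum_comm]
  exact Finset.sum_congr rfl fun y _ => pmass_tright p X Y W y w

lemma aux_log_ineq (a b c t : ℝ) (ht : 0 ≤ t) (hta : t ≤ a) (htb : t ≤ b) (htc : t ≤ c) :
    t * Real.logb 2 a + t * Real.logb 2 b - t * Real.logb 2 t - t * Real.logb 2 c
      ≤ (a * b / c - t) / Real.log 2 := by
  have hlog2 : 0 < Real.log 2 := Real.log_pos (by norm_num)
  rcases eq_or_lt_of_le ht with h0 | h0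
  · rw [← h0]
    simp only [zero_mul, add_zero, sub_zero, zero_add, zero_sub, neg_zero, sub_zero]
    have : 0 ≤ a * b / c := by
      rcases eq_or_lt_of_le (ht.trans htc) with hc | hc
      · rw [← hc]; simp
      · exact div_nonneg (mul_nonneg (h0 ▸ hta) (h0 ▸ htb)) hc.le
    exact div_nonneg this hlog2.le
  · have ha : 0 < a := lt_of_lt_of_le h0 hta
    have hb : 0 < b := lt_of_lt_of_le h0 htb
    have hc : 0 < c := lt_of_lt_of_le h0 htc
    have key : t * Real.log a + t * Real.log b - t * Real.log t - t * Real.log c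
        ≤ a * b / c - t := by
      have h1 : Real.log (a * b / (t * c)) ≤ a * b / (t * c) - 1 :=
        Real.log_le_sub_one_of_pos (by positivity)
      have h2 : Real.log (a * b / (t * c))
          = Real.log a + Real.log b - Real.log t - Real.log c := by
        rw [Real.log_div (by positivity) (by positivity), Real.log_mul ha.ne' hb.ne',
          Real.log_mul h0.ne' hc.ne']
        ring
      have h3 : t * (a * b / (t * c)) = a * b / c := by
        field_simp
      nlinarith [mul_le_mul_of_nonneg_left h1 ht]
    have : t * Real.logb 2 a + t * Real.logb 2 b - t * Real.logb 2 t - t * Real.logb 2 c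
        = (t * Real.log a + t * Real.log b - t * Real.log t - t * Real.log c) / Real.log 2 := by
      simp only [Real.logb]
      field_simp
    rw [this]
    exact div_le_div_of_nonneg_right key hlog2.le

lemma condEnt_nonneg [Fintype α] [Fintype β] [DecidableEq α] [DecidableEq β]
    (p : Ω → ℝ) (hp0 : ∀ ω, 0 ≤ p ω) (X : Ω → α) (Y : Ω → β) :
    0 ≤ condEnt p X Y := by
  classical
  set q : α → β → ℝ := fun a b => pmass p (fun ω => (X ω, Y ω)) (a, b) with hq
  have hq0 : ∀ a b, 0 ≤ q a b := fun a b => pmass_nonneg p hp0 _ _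
  have hs : ∀ b, pmass p Y b = ∑ a, q a b := fun b => pmass_snd' p X Y b
  have h1 : ent p (fun ω => (X ω, Y ω)) = ∑ b, ∑ a, -(q a b * Real.logb 2 (q a b)) := by
    rw [ent, Fintype.sum_prod_type, Finset.sum_comm]
  have h2 : ent p Y = ∑ b, ∑ a, -(q a b * Real.logb 2 (∑ a', q a' b)) := by
    rw [ent]
    refine Finset.sum_congr rfl fun b _ => ?_
    rw [hs b, Finset.sum_mul, ← Finset.sum_neg_distrib]
  rw [condEnt, h1, h2, ← Finset.sum_sub_distrib]
  refine Finset.sum_nonneg fun b _ => ?_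
  rw [← Finset.sum_sub_distrib]
  refine Finset.sum_nonneg fun a _ => ?_
  rcases eq_or_lt_of_le (hq0 a b) with h0 | h0
  · simp [← h0]
  · have hle : q a b ≤ ∑ a', q a' b :=
      Finset.single_le_sum (fun a' _ => hq0 a' b) (Finset.mem_univ a)
    have := Real.logb_le_logb_of_le (by norm_num : (1:ℝ) < 2) h0 hle
    nlinarith

lemma condMI_nonneg [Fintype α] [Fintype β] [Fintype γ] [DecidableEq α] [DecidableEq β]
    [DecidableEq γ] (p : Ω → ℝ) (hp0 : ∀ ω, 0 ≤ p ω)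
    (X : Ω → α) (Y : Ω → β) (W : Ω → γ) : 0 ≤ condMI p X Y W := by
  classical
  set T : α → β → γ → ℝ := fun x y w => pmass p (fun ω => ((X ω, Y ω), W ω)) ((x, y), w)
    with hT
  set A : α → γ → ℝ := fun x w => pmass p (fun ω => (X ω, W ω)) (x, w) with hA
  set B : β → γ → ℝ := fun y w => pmass p (fun ω => (Y ω, W ω)) (y, w) with hB
  set C : γ → ℝ := fun w => pmass p W w with hC
  have hT0 : ∀ x y w, 0 ≤ T x y w := fun x y w => pmass_nonneg p hp0 _ _
  have hAm : ∀ x w, A x w = ∑ y, T x y w := fun x w => pmass_tleft p X Y W x w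
  have hBm : ∀ y w, B y w = ∑ x, T x y w := fun y w => pmass_tright p X Y W y w
  have hCm : ∀ w, C w = ∑ x, ∑ y, T x y w := fun w => pmass_tw p X Y W w
  have hTA : ∀ x y w, T x y w ≤ A x w := fun x y w => by
    rw [hAm]; exact Finset.single_le_sum (fun y' _ => hT0 x y' w) (Finset.mem_univ y)
  have hTB : ∀ x y w, T x y w ≤ B y w := fun x y w => by
    rw [hBm]; exact Finset.single_le_sum (fun x' _ => hT0 x' y w) (Finset.mem_univ x)
  have hTC : ∀ x y w, T x y w ≤ C w := fun x y w => by
    rw [hCm]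
    calc T x y w ≤ ∑ y', T x y' w :=
          Finset.single_le_sum (fun y' _ => hT0 x y' w) (Finset.mem_univ y)
      _ ≤ ∑ x', ∑ y', T x' y' w :=
          Finset.single_le_sum (fun x' _ => Finset.sum_nonneg fun y' _ => hT0 x' y' w)
            (Finset.mem_univ x)
  have sum3c : ∀ f : α → β → γ → ℝ,
      ∑ x, ∑ y, ∑ w, f x y w = ∑ w, ∑ x, ∑ y, f x y w := by
    intro f
    calc ∑ x, ∑ y, ∑ w, f x y w = ∑ x, ∑ w, ∑ y, f x y w :=
          Finset.sum_congr rfl fun x _ => Finset.sum_comm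
      _ = ∑ w, ∑ x, ∑ y, f x y w := Finset.sum_comm
  have e1 : ent p (fun ω => (X ω, W ω))
      = ∑ w, ∑ x, ∑ y, -(T x y w * Real.logb 2 (A x w)) := by
    rw [ent, Fintype.sum_prod_type, Finset.sum_comm]
    refine Finset.sum_congr rfl fun w _ => Finset.sum_congr rfl fun x _ => ?_
    rw [show pmass p (fun ω => (X ω, W ω)) (x, w) = A x w from rfl, hAm, Finset.sum_mul,
      ← Finset.sum_neg_distrib]
  have e2 : ent p (fun ω => (Y ω, W ω))
      = ∑ w, ∑ x, ∑ y, -(T x y w * Real.logb 2 (B y w)) := by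
    rw [ent, Fintype.sum_prod_type, Finset.sum_comm]
    refine Finset.sum_congr rfl fun w _ => ?_
    rw [Finset.sum_comm]
    refine Finset.sum_congr rfl fun y _ => ?_
    rw [show pmass p (fun ω => (Y ω, W ω)) (y, w) = B y w from rfl, hBm, Finset.sum_mul,
      ← Finset.sum_neg_distrib]
  have e3 : ent p (fun ω => ((X ω, Y ω), W ω))
      = ∑ w, ∑ x, ∑ y, -(T x y w * Real.logb 2 (T x y w)) := by
    rw [ent, ← sum3c, Fintype.sum_prod_type, Fintype.sum_prod_type]
  have e4 : ent p W = ∑ w, ∑ x, ∑ y, -(T x y w * Real.logb 2 (C w)) := by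
    rw [ent]
    refine Finset.sum_congr rfl fun w _ => ?_
    rw [show pmass p W w = C w from rfl, hCm, Finset.sum_mul, ← Finset.sum_neg_distrib]
    refine Finset.sum_congr rfl fun x _ => ?_
    rw [Finset.sum_mul, ← Finset.sum_neg_distrib]
  have hcondMI : condMI p X Y W
      = ent p (fun ω => (X ω, W ω)) + ent p (fun ω => (Y ω, W ω))
        - ent p (fun ω => ((X ω, Y ω), W ω)) - ent p W := by
    unfold condMI condEnt
    ring
  have hxA : ∀ w, ∑ x, A x w = C w := fun w => by
    rw [hCm]; exact Finset.sum_congr rfl fun x _ => hAm x w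
  have hyB : ∀ w, ∑ y, B y w = C w := fun w => by
    rw [hCm, Finset.sum_comm]; exact Finset.sum_congr rfl fun y _ => hBm y w
  have hZ : ∑ w, ∑ x, ∑ y, (A x w * B y w / C w - T x y w) = 0 := by
    refine Finset.sum_eq_zero fun w _ => ?_
    have h1 : ∑ x, ∑ y, (A x w * B y w / C w) = C w := by
      have hin : ∀ x, ∑ y, (A x w * B y w / C w) = A x w * C w / C w := by
        intro x
        rw [← Finset.sum_div, ← Finset.mul_sum, hyB]
      rw [Finset.sum_congr rfl fun x _ => hin x, ← Finset.sum_div, ← Finset.sum_mul, hxA]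
      rcases eq_or_ne (C w) 0 with h | h
      · simp [h]
      · field_simp
    have h2 : ∑ x, ∑ y, T x y w = C w := (hCm w).symm
    simp only [Finset.sum_sub_distrib]
    rw [h1, h2]
    ring
  have hU : ∑ w, ∑ x, ∑ y, (T x y w * Real.logb 2 (A x w) + T x y w * Real.logb 2 (B y w)
      - T x y w * Real.logb 2 (T x y w) - T x y w * Real.logb 2 (C w)) ≤ 0 := by
    calc ∑ w, ∑ x, ∑ y, (T x y w * Real.logb 2 (A x w) + T x y w * Real.logb 2 (B y w)
          - T x y w * Real.logb 2 (T x y w) - T x y w * Real.logb 2 (C w))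
        ≤ ∑ w, ∑ x, ∑ y, ((A x w * B y w / C w - T x y w) / Real.log 2) := by
          refine Finset.sum_le_sum fun w _ => Finset.sum_le_sum fun x _ =>
            Finset.sum_le_sum fun y _ => ?_
          exact aux_log_ineq (A x w) (B y w) (C w) (T x y w) (hT0 x y w) (hTA x y w)
            (hTB x y w) (hTC x y w)
      _ = (∑ w, ∑ x, ∑ y, (A x w * B y w / C w - T x y w)) / Real.log 2 := by
          simp only [Finset.sum_div]
      _ = 0 := by rw [hZ]; simp
  rw [hcondMI, e1, e2, e3, e4]
  have expand : ∑ w, ∑ x, ∑ y, (T x y w * Real.logb 2 (A x w) + T x y w * Real.logb 2 (B y w)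
      - T x y w * Real.logb 2 (T x y w) - T x y w * Real.logb 2 (C w))
      = ∑ w, ∑ x, ∑ y, (T x y w * Real.logb 2 (A x w))
        + ∑ w, ∑ x, ∑ y, (T x y w * Real.logb 2 (B y w))
        - ∑ w, ∑ x, ∑ y, (T x y w * Real.logb 2 (T x y w))
        - ∑ w, ∑ x, ∑ y, (T x y w * Real.logb 2 (C w)) := by
    simp only [Finset.sum_add_distrib, Finset.sum_sub_distrib]
  rw [expand] at hU
  simp only [Finset.sum_neg_distrib]
  linarith

lemma pmass_subtuple {n : ℕ} [Fintype α] [DecidableEq α] (p : Ω → ℝ)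
    (hp1 : ∑ ω, p ω = 1) (X : Fin n → Ω → α) (hindep : MutIndep p X)
    (S : Finset (Fin n)) (a : ↥S → α) :
    pmass p (fun ω => fun j : ↥S => X j ω) a = ∏ j : ↥S, pmass p (X j) (a j) := by
  classical
  have step1 : pmass p (fun ω => fun j : ↥S => X j ω) a
      = ∑ b : Fin n → α, if (∀ j : ↥S, b j = a j)
          then pmass p (fun ω => fun i => X i ω) b else 0 := by
    unfold pmass
    have h1 : ∀ b : Fin n → α, (if (∀ j : ↥S, b j = a j)
          then ∑ ω, if (fun i => X i ω) = b then p ω else 0 else 0)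
        = ∑ ω, if (∀ j : ↥S, b j = a j) ∧ (fun i => X i ω) = b then p ω else 0 := by
      intro b
      split_ifs with h
      · simp [h]
      · refine (Finset.sum_eq_zero fun ω _ => ?_).symm
        rw [if_neg]
        exact fun hc => h hc.1
    rw [Finset.sum_congr rfl fun b _ => h1 b, Finset.sum_comm]
    refine Finset.sum_congr rfl fun ω _ => ?_
    rw [Finset.sum_eq_single (fun i => X i ω)]
    · simp [funext_iff]
    · intro b _ hb
      simp only [ite_eq_right_iff, and_imp]
      intro _ h; exact absurd h.symm hb
    · simp
  rw [step1, Finset.sum_congr rfl fun b _ => by rw [hindep b]]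
  set f : Fin n → α → ℝ := fun i x =>
    if h : i ∈ S then (if x = a ⟨i, h⟩ then pmass p (X i) x else 0)
    else pmass p (X i) x with hf
  have claim1 : ∀ b : Fin n → α,
      (if (∀ j : ↥S, b j = a j) then ∏ i, pmass p (X i) (b i) else 0)
        = ∏ i, f i (b i) := by
    intro b
    split_ifs with h
    · refine Finset.prod_congr rfl fun i _ => ?_
      by_cases hi : i ∈ S
      · rw [hf]; dsimp only; rw [dif_pos hi, if_pos (h ⟨i, hi⟩)]
      · rw [hf]; dsimp only; rw [dif_neg hi]
    · push_neg at h
      obtain ⟨j, hj⟩ := h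
      symm
      refine Finset.prod_eq_zero (Finset.mem_univ (j : Fin n)) ?_
      rw [hf]; dsimp only
      rw [dif_pos j.2, if_neg]
      exact fun hc => hj hc
  rw [Finset.sum_congr rfl fun b _ => claim1 b]
  have claim2 : ∑ b : Fin n → α, ∏ i, f i (b i) = ∏ i, ∑ x, f i x := by
    rw [Finset.prod_univ_sum]
    rw [Fintype.piFinset_univ]
  rw [claim2]
  have claim3 : ∀ i : Fin n, ∑ x, f i x
      = if h : i ∈ S then pmass p (X i) (a ⟨i, h⟩) else 1 := by
    intro i
    by_cases hi : i ∈ S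
    · rw [dif_pos hi]
      have hx : ∀ x, f i x = if x = a ⟨i, hi⟩ then pmass p (X i) x else 0 := by
        intro x; simp only [hf]; rw [dif_pos hi]
      rw [Finset.sum_congr rfl fun x _ => hx x]
      simp
    · rw [dif_neg hi]
      have hx : ∀ x, f i x = pmass p (X i) x := by
        intro x; simp only [hf]; rw [dif_neg hi]
      rw [Finset.sum_congr rfl fun x _ => hx x]
      exact sum_pmass p hp1 (X i)
  rw [Finset.prod_congr rfl fun i _ => claim3 i]
  rw [← Finset.prod_subset (Finset.subset_univ S) (fun i _ hi => dif_neg hi)]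
  rw [← Finset.prod_attach S fun i => if h : i ∈ S then pmass p (X i) (a ⟨i, h⟩) else 1]
  rw [Finset.univ_eq_attach]
  refine Finset.prod_congr rfl fun j _ => ?_
  rw [dif_pos j.2]

lemma ent_prod {ι : Type} [Fintype ι] [DecidableEq ι] [Fintype α] [DecidableEq α]
    (p : Ω → ℝ) (Z : Ω → (ι → α)) (q : ι → α → ℝ)
    (hq1 : ∀ i, ∑ x, q i x = 1)
    (hZ : ∀ a : ι → α, pmass p Z a = ∏ i, q i (a i)) :
    ent p Z = ∑ i, ∑ x, -(q i x * Real.logb 2 (q i x)) := by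
  classical
  have term1 : ∀ a : ι → α, -(pmass p Z a * Real.logb 2 (pmass p Z a))
      = ∑ i, -((∏ j, q j (a j)) * Real.logb 2 (q i (a i))) := by
    intro a
    rw [hZ]
    rcases eq_or_ne (∏ j, q j (a j)) 0 with h | h
    · rw [h]
      simp
    · rw [Real.logb_prod Finset.univ (fun j => q j (a j))
        (fun j _ => fun hj => h (Finset.prod_eq_zero (Finset.mem_univ j) hj)),
        Finset.mul_sum, ← Finset.sum_neg_distrib]
  rw [ent, Finset.sum_congr rfl fun a _ => term1 a, Finset.sum_comm]
  refine Finset.sum_congr rfl fun i _ => ?_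
  set g : ι → α → ℝ := fun j x =>
    if j = i then -(q j x * Real.logb 2 (q j x)) else q j x with hg
  have term2 : ∀ a : ι → α, -((∏ j, q j (a j)) * Real.logb 2 (q i (a i)))
      = ∏ j, g j (a j) := by
    intro a
    rw [← Finset.mul_prod_erase Finset.univ (fun j => q j (a j)) (Finset.mem_univ i),
      ← Finset.mul_prod_erase Finset.univ (fun j => g j (a j)) (Finset.mem_univ i)]
    have h1 : g i (a i) = -(q i (a i) * Real.logb 2 (q i (a i))) := by
      simp only [hg, if_pos rfl]
    have h2 : ∀ j ∈ Finset.univ.erase i, g j (a j) = q j (a j) := by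
      intro j hj
      simp only [hg, if_neg (Finset.mem_erase.1 hj).1]
    rw [h1, Finset.prod_congr rfl h2]
    ring
  rw [Finset.sum_congr rfl fun a _ => term2 a]
  have claim2 : ∑ a : ι → α, ∏ j, g j (a j) = ∏ j, ∑ x, g j x := by
    rw [Finset.prod_univ_sum, Fintype.piFinset_univ]
  rw [claim2, Finset.prod_eq_single i]
  · simp only [hg, if_pos rfl]
  · intro j _ hj
    have hx : ∀ x, g j x = q j x := fun x => by simp only [hg, if_neg hj]
    rw [Finset.sum_congr rfl fun x _ => hx x]
    exact hq1 j
  · intro h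
    exact absurd (Finset.mem_univ i) h

lemma ent_subtuple {n : ℕ} [Fintype α] [DecidableEq α] (p : Ω → ℝ)
    (hp1 : ∑ ω, p ω = 1) (X : Fin n → Ω → α) (hindep : MutIndep p X)
    (S : Finset (Fin n)) :
    ent p (fun ω => fun j : ↥S => X j ω)
      = ∑ i ∈ S, ∑ x, -(pmass p (X i) x * Real.logb 2 (pmass p (X i) x)) := by
  classical
  rw [ent_prod p _ (fun j : ↥S => fun x => pmass p (X j) x)
    (fun j => sum_pmass p hp1 (X j))
    (fun a => pmass_subtuple p hp1 X hindep S a)]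
  rw [Finset.univ_eq_attach,
    ← Finset.sum_attach S fun i => ∑ x, -(pmass p (X i) x * Real.logb 2 (pmass p (X i) x))]

end Auxiliary

section Main

variable {Ω α β : Type} {n : ℕ} [Fintype Ω] [Fintype α] [Fintype β]
    [DecidableEq α] [DecidableEq β]

lemma key_step (p : Ω → ℝ) (hp0 : ∀ ω, 0 ≤ p ω) (hp1 : ∑ ω, p ω = 1)
    (X : Fin n → Ω → α) (hindep : MutIndep p X) (Y : Ω → β) (A B : Finset (Fin n)) :
    condEnt p Y (fun ω => fun j : ↥(A ∩ B) => X j ω)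
      ≤ condEnt p Y (fun ω => fun j : ↥A => X j ω)
        + condEnt p Y (fun ω => fun j : ↥B => X j ω) := by
  classical
  -- submodularity via conditional mutual information
  have hMI := condMI_nonneg p hp0
    (fun ω => fun j : ↥(A \ B) => X j ω)
    (fun ω => fun j : ↥(B \ A) => X j ω)
    (fun ω => (Y ω, fun j : ↥(A ∩ B) => X j ω))
  -- identify the entropies appearing in hMI
  have congr1 : ent p (fun ω => ((fun j : ↥(A \ B) => X j ω),
        (Y ω, fun j : ↥(A ∩ B) => X j ω)))
      = ent p (fun ω => (Y ω, fun j : ↥A => X j ω)) := by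
    refine ent_congr p (fun ω => (Y ω, fun j : ↥A => X j ω)) _
      (f := fun d : β × (↥A → α) =>
        ((fun j : ↥(A \ B) => d.2 ⟨j, (Finset.mem_sdiff.1 j.2).1⟩),
          (d.1, fun j : ↥(A ∩ B) => d.2 ⟨j, (Finset.mem_inter.1 j.2).1⟩)))
      (g := fun c : (↥(A \ B) → α) × (β × (↥(A ∩ B) → α)) =>
        (c.2.1, fun j : ↥A =>
          if h : (j : Fin n) ∈ A \ B then c.1 ⟨j, h⟩
          else c.2.2 ⟨j, by
            have hb : (j : Fin n) ∈ B := by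
              by_contra hb
              exact h (Finset.mem_sdiff.2 ⟨j.2, hb⟩)
            exact Finset.mem_inter.2 ⟨j.2, hb⟩⟩))
      (fun ω => rfl) ?_
    intro ω
    dsimp only
    congr 1
    funext j
    split_ifs <;> rfl
  have congr2 : ent p (fun ω => ((fun j : ↥(B \ A) => X j ω),
        (Y ω, fun j : ↥(A ∩ B) => X j ω)))
      = ent p (fun ω => (Y ω, fun j : ↥B => X j ω)) := by
    refine ent_congr p (fun ω => (Y ω, fun j : ↥B => X j ω)) _
      (f := fun d : β × (↥B → α) =>
        ((fun j : ↥(B \ A) => d.2 ⟨j, (Finset.mem_sdiff.1 j.2).1⟩),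
          (d.1, fun j : ↥(A ∩ B) => d.2 ⟨j, (Finset.mem_inter.1 j.2).2⟩)))
      (g := fun c : (↥(B \ A) → α) × (β × (↥(A ∩ B) → α)) =>
        (c.2.1, fun j : ↥B =>
          if h : (j : Fin n) ∈ B \ A then c.1 ⟨j, h⟩
          else c.2.2 ⟨j, by
            have hb : (j : Fin n) ∈ A := by
              by_contra hb
              exact h (Finset.mem_sdiff.2 ⟨j.2, hb⟩)
            exact Finset.mem_inter.2 ⟨hb, j.2⟩⟩))
      (fun ω => rfl) ?_
    intro ω
    dsimp only
    congr 1
    funext j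
    split_ifs <;> rfl
  have congr3 : ent p (fun ω => (((fun j : ↥(A \ B) => X j ω),
        (fun j : ↥(B \ A) => X j ω)),
        (Y ω, fun j : ↥(A ∩ B) => X j ω)))
      = ent p (fun ω => (Y ω, fun j : ↥(A ∪ B) => X j ω)) := by
    refine ent_congr p (fun ω => (Y ω, fun j : ↥(A ∪ B) => X j ω)) _
      (f := fun d : β × (↥(A ∪ B) → α) =>
        (((fun j : ↥(A \ B) => d.2 ⟨j, Finset.mem_union_left _ (Finset.mem_sdiff.1 j.2).1⟩),
          (fun j : ↥(B \ A) => d.2 ⟨j, Finset.mem_union_right _ (Finset.mem_sdiff.1 j.2).1⟩)),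
          (d.1, fun j : ↥(A ∩ B) => d.2 ⟨j, Finset.mem_union_left _ (Finset.mem_inter.1 j.2).1⟩)))
      (g := fun c : ((↥(A \ B) → α) × (↥(B \ A) → α)) × (β × (↥(A ∩ B) → α)) =>
        (c.2.1, fun j : ↥(A ∪ B) =>
          if h : (j : Fin n) ∈ A \ B then c.1.1 ⟨j, h⟩
          else if h2 : (j : Fin n) ∈ B \ A then c.1.2 ⟨j, h2⟩
          else c.2.2 ⟨j, by
            rcases Finset.mem_union.1 j.2 with ha | hb
            · have hb : (j : Fin n) ∈ B := by
                by_contra hb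
                exact h (Finset.mem_sdiff.2 ⟨ha, hb⟩)
              exact Finset.mem_inter.2 ⟨ha, hb⟩
            · have ha : (j : Fin n) ∈ A := by
                by_contra ha
                exact h2 (Finset.mem_sdiff.2 ⟨hb, ha⟩)
              exact Finset.mem_inter.2 ⟨ha, hb⟩⟩))
      (fun ω => rfl) ?_
    intro ω
    dsimp only
    congr 1
    funext j
    split_ifs <;> rfl
  -- independence: entropies of the X-tuples add across ∪/∩
  have hadd : ent p (fun ω => fun j : ↥A => X j ω) + ent p (fun ω => fun j : ↥B => X j ω)
      = ent p (fun ω => fun j : ↥(A ∪ B) => X j ω)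
        + ent p (fun ω => fun j : ↥(A ∩ B) => X j ω) := by
    rw [ent_subtuple p hp1 X hindep A, ent_subtuple p hp1 X hindep B,
      ent_subtuple p hp1 X hindep (A ∪ B), ent_subtuple p hp1 X hindep (A ∩ B)]
    exact (Finset.sum_union_inter).symm
  -- nonnegativity of H(Y | 𝒳_{A∪B})
  have hnn := condEnt_nonneg p hp0 Y (fun ω => fun j : ↥(A ∪ B) => X j ω)
  -- put it all together
  unfold condMI condEnt at hMI
  rw [congr1, congr2, congr3] at hMI
  unfold condEnt at hnn ⊢
  linarith

lemma condEnt_empty_index (p : Ω → ℝ) (hp1 : ∑ ω, p ω = 1)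
    (X : Fin n → Ω → α) (Y : Ω → β) (S : Finset (Fin n)) (hS : ∀ j : Fin n, j ∉ S) :
    condEnt p Y (fun ω => fun j : ↥S => X j ω) = ent p Y := by
  classical
  haveI : IsEmpty ↥S := ⟨fun j => hS j.1 j.2⟩
  have hent0 : ent p (fun ω => fun j : ↥S => X j ω) = 0 := by
    rw [ent]
    rw [Fintype.sum_unique]
    have : pmass p (fun ω => fun j : ↥S => X j ω) default = 1 := by
      unfold pmass
      rw [Finset.sum_congr rfl fun ω _ => if_pos (Subsingleton.elim _ _)]
      exact hp1
    rw [this]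
    simp
  have hpair : ent p Y = ent p (fun ω => (Y ω, fun j : ↥S => X j ω)) :=
    ent_congr p _ _
      (f := fun c : β × (↥S → α) => c.1)
      (g := fun b : β => (b, default))
      (fun ω => rfl)
      (fun ω => by
        congr 1
        exact Subsingleton.elim _ _)
  rw [condEnt, hent0, ← hpair]
  ring

end Main

/-- if `X1,…,Xn` are mutually independent and `S1 ∩ S2 ∩ S3 = ∅`,
then `H(Y|𝒳1) + H(Y|𝒳2) + H(Y|𝒳3) ≥ H(Y)` where `𝒳i = (Xj : j ∈ Si)`. -/
theorem stmt_5 {Ω α β : Type} {n : ℕ} [Fintype Ω] [Fintype α] [Fintype β]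
    [DecidableEq α] [DecidableEq β]
    (p : Ω → ℝ) (hp0 : ∀ ω, 0 ≤ p ω) (hp1 : ∑ ω, p ω = 1)
    (X : Fin n → Ω → α) (hindep : MutIndep p X)
    (S1 S2 S3 : Finset (Fin n)) (hS : S1 ∩ S2 ∩ S3 = ∅)
    (Y : Ω → β) :
    ent p Y ≤
      condEnt p Y (fun ω => fun j : ↥S1 => X j ω)
        + condEnt p Y (fun ω => fun j : ↥S2 => X j ω)
        + condEnt p Y (fun ω => fun j : ↥S3 => X j ω) := by
  have t1 := key_step p hp0 hp1 X hindep Y S1 S2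
  have t2 := key_step p hp0 hp1 X hindep Y (S1 ∩ S2) S3
  have t3 : condEnt p Y (fun ω => fun j : ↥(S1 ∩ S2 ∩ S3) => X j ω) = ent p Y :=
    condEnt_empty_index p hp1 X Y _ (fun j hj => by rw [hS] at hj; exact absurd hj (Finset.notMem_empty j))
  linarith
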